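/- For every real a > 0, ∫₀¹ dv / ((2 − v)√(v + a)(√v + √(v + a))) ≤ log(1 + 1/a). -/

import Mathlib

open Real MeasureTheory

theorem stmt11 (a : ℝ) (ha : 0 < a) :
    (∫ v in Set.Ioo (0:ℝ) 1,
        1 / ((2 - v) * Real.sqrt (v + a) * (Real.sqrt v + Real.sqrt (v + a))))
      ≤ Real.log (1 + 1 / a) := by
  have hg : IntegrableOn (fun v : ℝ => 1 / (v + a)) (Set.Ioo 0 1) := by
    apply (ContinuousOn.integrableOn_compact isCompact_Icc ?_).mono_set
      Set.Ioo_subset_Icc_self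
    intro x hx
    exact (continuousAt_const.div (continuousAt_id.add continuousAt_const)
      (by show x + a ≠ 0; exact ne_of_gt (by linarith [hx.1]))).continuousWithinAt
  have hmono : ∫ v in Set.Ioo (0:ℝ) 1,
      1 / ((2 - v) * Real.sqrt (v + a) * (Real.sqrt v + Real.sqrt (v + a)))
      ≤ ∫ v in Set.Ioo (0:ℝ) 1, 1 / (v + a) := by
    apply integral_mono_of_nonneg ?_ hg ?_
    · filter_upwards [ae_restrict_mem measurableSet_Ioo] with v hv
      have h1 : (0:ℝ) < 2 - v := by linarith [hv.2]
      have h2 : 0 < Real.sqrt (v + a) := Real.sqrt_pos.2 (by linarith [hv.1])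
      have h3 : 0 < Real.sqrt v + Real.sqrt (v + a) :=
        lt_of_lt_of_le h2 (le_add_of_nonneg_left (Real.sqrt_nonneg v))
      positivity
    · filter_upwards [ae_restrict_mem measurableSet_Ioo] with v hv
      have hva : (0:ℝ) < v + a := by linarith [hv.1]
      have h2 : 0 < Real.sqrt (v + a) := Real.sqrt_pos.2 hva
      have h1 : (1:ℝ) ≤ 2 - v := by linarith [hv.2]
      have hs : 0 ≤ Real.sqrt v := Real.sqrt_nonneg v
      have hsq : Real.sqrt (v + a) * Real.sqrt (v + a) = v + a :=
        Real.mul_self_sqrt hva.le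
      apply one_div_le_one_div_of_le hva
      calc v + a = Real.sqrt (v + a) * Real.sqrt (v + a) := hsq.symm
        _ ≤ (2 - v) * Real.sqrt (v + a) * (Real.sqrt v + Real.sqrt (v + a)) := by
            nlinarith [mul_nonneg h2.le hs,
              mul_nonneg (mul_nonneg (by linarith : (0:ℝ) ≤ 2 - v - 1) h2.le)
                (by linarith : (0:ℝ) ≤ Real.sqrt v + Real.sqrt (v + a))]
  refine hmono.trans_eq ?_
  have h1 : ∫ v in Set.Ioo (0:ℝ) 1, 1 / (v + a)
      = ∫ v in (0:ℝ)..1, (v + a)⁻¹ := by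
    rw [intervalIntegral.integral_of_le zero_le_one,
      MeasureTheory.integral_Ioc_eq_integral_Ioo]
    simp [one_div]
  rw [h1, intervalIntegral.integral_comp_add_right (fun x => x⁻¹) a, zero_add,
    integral_inv (by
      simp only [Set.mem_uIcc, not_or]
      constructor <;> intro h <;> linarith [h.1, h.2] : (0:ℝ) ∉ Set.uIcc a (1 + a))]
  congr 1
  field_simp
  ring
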